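/- If (a,b) lies in the orbit O(r,s) of (r,s) under the maps α, β, γ, δ, then gcd(a,b)/gcd(r,s) is a (possibly negative) power of 2, i.e., there is m ∈ ℤ with gcd(a,b) = 2^m · gcd(r,s) as rational numbers. -/

import Mathlib

/-- One application of an alternative-law map on pairs of positive integers:
`α(r,s) = (2r, s-r)` for `s > r`, `β(r,s) = (r-s, 2s)` for `r > s`,
`γ(r,s) = (r/2, s + r/2)` for `r` even, `δ(r,s) = (r + s/2, s/2)` for `s` even. -/
def AltStep (p q : ℕ × ℕ) : Prop :=
  (p.1 < p.2 ∧ q = (2 * p.1, p.2 - p.1)) ∨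
  (p.2 < p.1 ∧ q = (p.1 - p.2, 2 * p.2)) ∨
  (∃ t, p.1 = 2 * t ∧ q = (t, p.2 + t)) ∨
  (∃ t, p.2 = 2 * t ∧ q = (p.1 + t, t))

/-- `q` belongs to the orbit `O(p)`. -/
def InOrbit (p q : ℕ × ℕ) : Prop := Relation.ReflTransGen AltStep p q

lemma altstep_dvd {p q : ℕ × ℕ} (h : AltStep p q) :
    p.1.gcd p.2 ∣ 2 * q.1.gcd q.2 ∧ q.1.gcd q.2 ∣ 2 * p.1.gcd p.2 := by
  obtain ⟨x, y⟩ := p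
  rcases h with ⟨hlt, rfl⟩ | ⟨hlt, rfl⟩ | ⟨t, ht, rfl⟩ | ⟨t, ht, rfl⟩
  · simp only
    constructor
    · refine Dvd.dvd.mul_left (Nat.dvd_gcd ?_ ?_) 2
      · exact Dvd.dvd.mul_left (Nat.gcd_dvd_left x y) 2
      · exact Nat.dvd_sub (Nat.gcd_dvd_right x y) (Nat.gcd_dvd_left x y)
    · rw [show 2 * Nat.gcd x y = Nat.gcd (2 * x) (2 * y) from (Nat.gcd_mul_left 2 x y).symm]
      refine Nat.dvd_gcd (Nat.gcd_dvd_left _ _) ?_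
      have h1 : Nat.gcd (2 * x) (y - x) ∣ 2 * (y - x) :=
        Dvd.dvd.mul_left (Nat.gcd_dvd_right _ _) 2
      have h2 := Nat.gcd_dvd_left (2 * x) (y - x)
      have he : 2 * y = 2 * (y - x) + 2 * x := by omega
      rw [he]
      exact Nat.dvd_add h1 h2
  · simp only
    constructor
    · refine Dvd.dvd.mul_left (Nat.dvd_gcd ?_ ?_) 2
      · exact Nat.dvd_sub (Nat.gcd_dvd_left x y) (Nat.gcd_dvd_right x y)
      · exact Dvd.dvd.mul_left (Nat.gcd_dvd_right x y) 2
    · rw [show 2 * Nat.gcd x y = Nat.gcd (2 * x) (2 * y) from (Nat.gcd_mul_left 2 x y).symm]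
      refine Nat.dvd_gcd ?_ (Nat.gcd_dvd_right _ _)
      have h1 : Nat.gcd (x - y) (2 * y) ∣ 2 * (x - y) :=
        Dvd.dvd.mul_left (Nat.gcd_dvd_left _ _) 2
      have h2 := Nat.gcd_dvd_right (x - y) (2 * y)
      have he : 2 * x = 2 * (x - y) + 2 * y := by omega
      rw [he]
      exact Nat.dvd_add h1 h2
  · subst ht
    constructor
    · rw [show (2 : ℕ) * Nat.gcd t (y + t) = Nat.gcd (2 * t) (2 * (y + t)) from
        (Nat.gcd_mul_left 2 t (y + t)).symm]
      refine Nat.dvd_gcd (Nat.gcd_dvd_left _ _) ?_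
      have h1 : Nat.gcd (2 * t) y ∣ 2 * y := Dvd.dvd.mul_left (Nat.gcd_dvd_right _ _) 2
      have h2 := Nat.gcd_dvd_left (2 * t) y
      have he : 2 * (y + t) = 2 * y + 2 * t := by ring
      rw [he]
      exact Nat.dvd_add h1 h2
    · have hy : Nat.gcd t (y + t) ∣ y := by
        have := Nat.dvd_sub (Nat.gcd_dvd_right t (y + t)) (Nat.gcd_dvd_left t (y + t))
        simpa using this
      exact Dvd.dvd.mul_left
        (Nat.dvd_gcd (dvd_mul_of_dvd_right (Nat.gcd_dvd_left _ _) 2) hy) 2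
  · subst ht
    constructor
    · rw [show (2 : ℕ) * Nat.gcd (x + t) t = Nat.gcd (2 * (x + t)) (2 * t) from
        (Nat.gcd_mul_left 2 (x + t) t).symm]
      refine Nat.dvd_gcd ?_ (Nat.gcd_dvd_right _ _)
      have h1 : Nat.gcd x (2 * t) ∣ 2 * x := Dvd.dvd.mul_left (Nat.gcd_dvd_left _ _) 2
      have h2 := Nat.gcd_dvd_right x (2 * t)
      have he : 2 * (x + t) = 2 * x + 2 * t := by ring
      rw [he]
      exact Nat.dvd_add h1 h2
    · have hx : Nat.gcd (x + t) t ∣ x := by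
        have := Nat.dvd_sub (Nat.gcd_dvd_left (x + t) t) (Nat.gcd_dvd_right (x + t) t)
        simpa using this
      exact Dvd.dvd.mul_left
        (Nat.dvd_gcd hx (dvd_mul_of_dvd_right (Nat.gcd_dvd_right _ _) 2)) 2

lemma ratio_pow_two {x y : ℕ} (hy : 0 < y) (h1 : y ∣ 2 * x) (h2 : x ∣ 2 * y) :
    ∃ m : ℤ, (x : ℚ) = 2 ^ m * (y : ℚ) := by
  obtain ⟨k, hk⟩ := h2
  obtain ⟨l, hl⟩ := h1
  have hx : 0 < x := by
    rcases Nat.eq_zero_or_pos x with h | h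
    · subst h; simp at hk; omega
    · exact h
  have h4 : 4 * (x * y) = (k * l) * (x * y) := by
    calc 4 * (x * y) = (2 * y) * (2 * x) := by ring
    _ = (x * k) * (y * l) := by rw [← hk, ← hl]
    _ = (k * l) * (x * y) := by ring
  have hkl : 4 = k * l := Nat.eq_of_mul_eq_mul_right (Nat.mul_pos hx hy) h4
  have hk0 : 0 < k := by
    rcases Nat.eq_zero_or_pos k with h | h
    · subst h; simp at hkl
    · exact h
  have hk4 : k ≤ 4 := Nat.le_of_dvd (by norm_num) ⟨l, hkl⟩
  interval_cases k
  · refine ⟨1, ?_⟩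
    have hxe : x = 2 * y := by omega
    rw [hxe]; push_cast; rfl
  · refine ⟨0, ?_⟩
    have hxe : x = y := by omega
    rw [hxe]; rw [zpow_zero, one_mul]
  · omega
  · refine ⟨-1, ?_⟩
    have hye : y = 2 * x := by omega
    rw [hye]; push_cast; rw [zpow_neg, zpow_one]; field_simp

theorem orbit_gcd_pow_two (r s a b : ℕ) (hr : 0 < r) (hs : 0 < s)
    (h : InOrbit (r, s) (a, b)) :
    ∃ m : ℤ, (Nat.gcd a b : ℚ) = 2 ^ m * (Nat.gcd r s : ℚ) := by
  have key : ∀ q : ℕ × ℕ, InOrbit (r, s) q →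
      ∃ m : ℤ, (0 < Nat.gcd q.1 q.2) ∧ (Nat.gcd q.1 q.2 : ℚ) = 2 ^ m * (Nat.gcd r s : ℚ) := by
    intro q hq
    induction hq with
    | refl => exact ⟨0, Nat.gcd_pos_of_pos_left _ hr, by simp⟩
    | tail _ hstep ih =>
      obtain ⟨m, hpos, heq⟩ := ih
      obtain ⟨hd1, hd2⟩ := altstep_dvd hstep
      rename_i p' q' _
      obtain ⟨m', hm'⟩ := ratio_pow_two hpos hd1 hd2
      have hqpos : 0 < Nat.gcd q'.1 q'.2 := by
        have hgrs : 0 < Nat.gcd r s := Nat.gcd_pos_of_pos_left _ hr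
        have h0 : (0 : ℚ) < (Nat.gcd q'.1 q'.2 : ℚ) := by
          rw [hm', heq]
          have : (0 : ℚ) < (Nat.gcd r s : ℚ) := by exact_mod_cast hgrs
          positivity
        exact_mod_cast h0
      exact ⟨m' + m, hqpos, by rw [hm', heq, zpow_add₀ (by norm_num : (2:ℚ) ≠ 0)]; ring⟩
  obtain ⟨m, _, heq⟩ := key (a, b) h
  exact ⟨m, heq⟩
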